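/- Let (x_i)_{i∈I} be a finite nonempty family of points of ℝ^n and let y ∈ ℝ^n. Assume there is an index i_0 ∈ I such that for every i ∈ I, either x_i = x_{i_0} or ‖y − x_{i_0}‖ < ‖y − x_i‖ (i.e. the closest point of the family to y is unique as a point). Then lim_{ε→0⁺} ( Σ_{i∈I} x_i exp(−‖y−x_i‖²/(2ε)) ) / ( Σ_{i∈I} exp(−‖y−x_i‖²/(2ε)) ) = x_{i_0}. -/
import Mathlib


open scoped BigOperators

/-- Laplace principle. Let `(x i)` be a finite nonempty family of points of
`ℝ^n` and `y ∈ ℝ^n`. If the closest point of the family to `y` is unique as a point (witnessed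
by the index `i0`), then the Gaussian-softmax-weighted barycenter
`(∑ i, exp(−‖y−x i‖²/(2ε)))⁻¹ • ∑ i, exp(−‖y−x i‖²/(2ε)) • x i`
converges to `x i0` as `ε → 0⁺`. -/
theorem statement11 {n : ℕ} {I : Type*} [Fintype I] [Nonempty I]
    (x : I → EuclideanSpace ℝ (Fin n)) (y : EuclideanSpace ℝ (Fin n)) (i0 : I)
    (h : ∀ i, x i = x i0 ∨ ‖y - x i0‖ < ‖y - x i‖) :
    Filter.Tendsto
      (fun ε : ℝ =>
        (∑ i, Real.exp (-‖y - x i‖ ^ 2 / (2 * ε)))⁻¹ •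
          ∑ i, Real.exp (-‖y - x i‖ ^ 2 / (2 * ε)) • x i)
      (nhdsWithin 0 (Set.Ioi 0)) (nhds (x i0)) := by
  classical
  set d : I → ℝ := fun i => ‖y - x i‖ ^ 2 with hd
  set w : I → ℝ → ℝ := fun i ε => Real.exp ((d i0 - d i) / (2 * ε)) with hw
  set L : I → ℝ := fun i => if x i = x i0 then 1 else 0 with hL
  -- each normalized weight tends to its indicator
  have hwlim : ∀ i, Filter.Tendsto (fun ε => w i ε)
      (nhdsWithin 0 (Set.Ioi 0)) (nhds (L i)) := by
    intro i
    rcases h i with hi | hi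
    · have hdeq : d i = d i0 := by simp [hd, hi]
      simp only [hw, hL, hdeq, hi, if_true, sub_self, zero_div, Real.exp_zero]
      exact tendsto_const_nhds
    · have hne : ¬ x i = x i0 := by
        intro hx; rw [hx] at hi; exact lt_irrefl _ hi
      have hlt : d i0 - d i < 0 := by
        have : d i0 < d i := by
          apply pow_lt_pow_left₀ hi (norm_nonneg _)
          norm_num
        linarith
      have h1 : Filter.Tendsto (fun ε : ℝ => (d i0 - d i) / (2 * ε))
          (nhdsWithin 0 (Set.Ioi 0)) Filter.atBot := by
        have h2 : Filter.Tendsto (fun ε : ℝ => ε⁻¹)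
            (nhdsWithin 0 (Set.Ioi 0)) Filter.atTop := tendsto_inv_nhdsGT_zero
        have h3 : Filter.Tendsto (fun ε : ℝ => ((d i0 - d i) / 2) * ε⁻¹)
            (nhdsWithin 0 (Set.Ioi 0)) Filter.atBot := by
          apply Filter.Tendsto.const_mul_atTop_of_neg _ h2
          linarith
        refine h3.congr (fun ε => ?_)
        field_simp
      simp only [hw, hL, hne, if_false]
      exact Real.tendsto_exp_atBot.comp h1
  -- the total mass limit
  set s : ℝ := ∑ i, L i with hs
  have hspos : 0 < s := by
    rw [hs]
    apply Finset.sum_pos' (fun i _ => by positivity) ⟨i0, Finset.mem_univ i0, by simp [hL]⟩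
  have hSlim : Filter.Tendsto (fun ε => ∑ i, w i ε)
      (nhdsWithin 0 (Set.Ioi 0)) (nhds s) :=
    tendsto_finset_sum _ (fun i _ => hwlim i)
  have hVlim : Filter.Tendsto (fun ε => ∑ i, w i ε • x i)
      (nhdsWithin 0 (Set.Ioi 0)) (nhds (s • x i0)) := by
    have : (s • x i0 : EuclideanSpace ℝ (Fin n)) = ∑ i, L i • x i := by
      rw [hs, Finset.sum_smul]
      refine Finset.sum_congr rfl (fun i _ => ?_)
      by_cases hi : x i = x i0 <;> simp [hL, hi]
    rw [this]
    exact tendsto_finset_sum _ (fun i _ => (hwlim i).smul tendsto_const_nhds)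
  have hmain : Filter.Tendsto (fun ε => (∑ i, w i ε)⁻¹ • ∑ i, w i ε • x i)
      (nhdsWithin 0 (Set.Ioi 0)) (nhds (x i0)) := by
    have := (hSlim.inv₀ hspos.ne').smul hVlim
    rwa [smul_smul, inv_mul_cancel₀ hspos.ne', one_smul] at this
  refine hmain.congr' ?_
  filter_upwards [self_mem_nhdsWithin] with ε (hε : 0 < ε)
  have hE : Real.exp (d i0 / (2 * ε)) ≠ 0 := Real.exp_ne_zero _
  have hkey : ∀ i, w i ε = Real.exp (-d i / (2 * ε)) * Real.exp (d i0 / (2 * ε)) := by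
    intro i
    have harg : (d i0 - d i) / (2 * ε) = -d i / (2 * ε) + d i0 / (2 * ε) := by ring
    simp only [hw, harg, Real.exp_add]
  have hsum : (∑ i, w i ε) = (∑ i, Real.exp (-d i / (2 * ε))) * Real.exp (d i0 / (2 * ε)) := by
    rw [Finset.sum_mul]; exact Finset.sum_congr rfl (fun i _ => hkey i)
  have hvec : (∑ i, w i ε • x i)
      = Real.exp (d i0 / (2 * ε)) • ∑ i, Real.exp (-d i / (2 * ε)) • x i := by
    rw [Finset.smul_sum]
    refine Finset.sum_congr rfl (fun i _ => ?_)
    rw [hkey, smul_smul, mul_comm]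
  rw [hsum, hvec, mul_inv, smul_smul, mul_assoc, inv_mul_cancel₀ hE, mul_one]
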